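/- The function y = z J_ν'(z) + c J_ν(z) satisfies z²(z² − ν² + c²) y'' − z(z² + ν² − c²) y' + [(z² − ν²)² + 2c z² + c²(z² − ν²)] y = 0. -/

import Mathlib

open Real

/-- The Bessel function of the first kind `J_ν(x)`, for `x > 0`, defined by its series. -/
noncomputable def besselJ (ν : ℝ) (x : ℝ) : ℝ :=
  ∑' n : ℕ, (-1 : ℝ) ^ n * (x / 2) ^ (2 * (n : ℝ) + ν) / (n.factorial * Real.Gamma (ν + n + 1))

open Filter in
/-! ### Auxiliary definitions -/

noncomputable def besselCoef (ν : ℝ) (n : ℕ) : ℝ :=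
  (-1 : ℝ) ^ n / (n.factorial * Real.Gamma (ν + n + 1))

noncomputable def bt0 (ν : ℝ) (n : ℕ) (x : ℝ) : ℝ :=
  besselCoef ν n * (x/2) ^ (2*(n:ℝ)+ν)

noncomputable def bt1 (ν : ℝ) (n : ℕ) (x : ℝ) : ℝ :=
  besselCoef ν n * ((2*(n:ℝ)+ν) * (1/2)) * (x/2) ^ (2*(n:ℝ)+ν-1)

noncomputable def bt2 (ν : ℝ) (n : ℕ) (x : ℝ) : ℝ :=
  besselCoef ν n * ((2*(n:ℝ)+ν) * (1/2)) * ((2*(n:ℝ)+ν-1) * (1/2)) * (x/2) ^ (2*(n:ℝ)+ν-2)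

/-! ### Coefficient recursion -/

lemma besselCoef_key (ν : ℝ) (n : ℕ) :
    besselCoef ν (n + 1) * ((n + 1) * (ν + n + 1)) = - besselCoef ν n := by
  unfold besselCoef
  rcases eq_or_ne (ν + n + 1) 0 with h0 | h0
  · rw [h0]
    simp [Real.Gamma_zero]
  · have hΓadd : Real.Gamma (ν + ↑(n + 1) + 1) = (ν + n + 1) * Real.Gamma (ν + n + 1) := by
      have := Real.Gamma_add_one h0
      rw [show (ν + ↑(n + 1) + 1 : ℝ) = (ν + n + 1) + 1 by push_cast; ring]
      exact this
    rcases eq_or_ne (Real.Gamma (ν + n + 1)) 0 with hΓ | hΓ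
    · rw [hΓadd, hΓ]
      simp
    · rw [hΓadd]
      have hfact : ((n + 1).factorial : ℝ) = (n + 1) * n.factorial := by
        push_cast [Nat.factorial_succ]; ring
      rw [hfact]
      have h1 : ((n:ℝ) + 1) ≠ 0 := by positivity
      have h2 : (n.factorial : ℝ) ≠ 0 := by positivity
      field_simp
      ring

/-! ### Summable majorant -/

lemma besselMajorant_summable (ν B : ℝ) (hBnn : 0 ≤ B) :
    Summable (fun n : ℕ => (2*(n:ℝ)+|ν|+2)^2 * B^(2*n) /
      ((n.factorial : ℝ) * |Real.Gamma (ν+(n:ℝ)+1)|)) := by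
  apply summable_of_ratio_norm_eventually_le (r := 1/2) (by norm_num)
  obtain ⟨N, hN⟩ := exists_nat_ge (|ν| + 8*B^2)
  filter_upwards [Filter.eventually_ge_atTop N] with n hn
  have hnR : (|ν| + 8*B^2 : ℝ) ≤ n := le_trans hN (by exact_mod_cast hn)
  have habs : (0:ℝ) ≤ |ν| := abs_nonneg ν
  have hB2 : (0:ℝ) ≤ B^2 := sq_nonneg B
  have hν : (1:ℝ) ≤ ν + n + 1 := by
    have h1 : |ν| ≤ (n:ℝ) := by nlinarith
    have h2 := neg_abs_le ν
    linarith
  have hΓpos : 0 < Real.Gamma (ν + n + 1) := Real.Gamma_pos_of_pos (by linarith)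
  have hΓadd : Real.Gamma (ν + ((n:ℝ)+1) + 1) = (ν + n + 1) * Real.Gamma (ν + n + 1) := by
    rw [show (ν + ((n:ℝ)+1) + 1 : ℝ) = (ν + n + 1) + 1 by ring]
    exact Real.Gamma_add_one (by linarith)
  set Q0 : ℝ := 2*(n:ℝ)+|ν|+2 with hQ0
  have hQ0pos : (0:ℝ) < Q0 := by positivity
  have hQ02 : (2:ℝ) ≤ Q0 := by
    have h0 : (0:ℝ) ≤ (n:ℝ) := Nat.cast_nonneg n
    simp only [hQ0]; linarith
  set g : ℝ := Real.Gamma (ν + n + 1) with hg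
  have hfactpos : (0:ℝ) < (n.factorial : ℝ) := by positivity
  have key : (2*((n:ℕ)+1:ℝ)+|ν|+2)^2 * B^(2*(n+1)) /
        (((n+1).factorial : ℝ) * |Real.Gamma (ν+((n:ℝ)+1)+1)|)
      = (Q0^2 * B^(2*n) / ((n.factorial : ℝ) * |g|)) *
        (((Q0+2)/Q0)^2 * (B^2/(((n:ℝ)+1)*(ν+n+1)))) := by
    rw [hΓadd, abs_of_pos (mul_pos (by linarith) hΓpos), abs_of_pos hΓpos]
    have hfs : ((n+1).factorial : ℝ) = ((n:ℝ)+1) * (n.factorial : ℝ) := by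
      push_cast [Nat.factorial_succ]; ring
    rw [hfs]
    have h1 : ((n:ℝ)+1) ≠ 0 := by positivity
    have h2 : (n.factorial : ℝ) ≠ 0 := by positivity
    have h3 : (ν + (n:ℝ) + 1) ≠ 0 := by linarith
    have h4 : Q0 ≠ 0 := ne_of_gt hQ0pos
    have h5 : g ≠ 0 := ne_of_gt hΓpos
    field_simp
    ring
  have hfac : ((Q0+2)/Q0)^2 * (B^2/(((n:ℝ)+1)*(ν+n+1))) ≤ 1/2 := by
    have h1 : (Q0+2)/Q0 ≤ 2 := by rw [div_le_iff₀ hQ0pos]; linarith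
    have h1' : (0:ℝ) ≤ (Q0+2)/Q0 := by positivity
    have h2 : ((Q0+2)/Q0)^2 ≤ 4 := by nlinarith
    have h3 : B^2/(((n:ℝ)+1)*(ν+n+1)) ≤ 1/8 := by
      rw [div_le_iff₀ (by positivity)]
      nlinarith [mul_le_mul_of_nonneg_left hν (by positivity : (0:ℝ) ≤ (n:ℝ)+1)]
    have h4 : (0:ℝ) ≤ B^2/(((n:ℝ)+1)*(ν+n+1)) := by positivity
    calc ((Q0+2)/Q0)^2 * (B^2/(((n:ℝ)+1)*(ν+n+1))) ≤ 4 * (1/8) := by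
          apply mul_le_mul h2 h3 h4 (by norm_num)
      _ = 1/2 := by norm_num
  have hv0 : (0:ℝ) ≤ Q0^2 * B^(2*n) / ((n.factorial : ℝ) * |g|) := by positivity
  have hv1 : (0:ℝ) ≤ (2*((n:ℕ)+1:ℝ)+|ν|+2)^2 * B^(2*(n+1)) /
      (((n+1).factorial : ℝ) * |Real.Gamma (ν+((n:ℝ)+1)+1)|) := by positivity
  rw [Real.norm_eq_abs, Real.norm_eq_abs]
  push_cast
  push_cast at key hv1
  rw [abs_of_nonneg hv1, abs_of_nonneg hv0, key]
  calc (Q0^2 * B^(2*n) / ((n.factorial : ℝ) * |g|)) *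
        (((Q0+2)/Q0)^2 * (B^2/(((n:ℝ)+1)*(ν+n+1))))
      ≤ (Q0^2 * B^(2*n) / ((n.factorial : ℝ) * |g|)) * (1/2) :=
        mul_le_mul_of_nonneg_left hfac hv0
    _ = 1/2 * (Q0^2 * B^(2*n) / ((n.factorial : ℝ) * |g|)) := by ring

/-! ### Termwise derivative and bound -/

lemma besselHD (k p : ℝ) {x : ℝ} (hx : 0 < x) :
    HasDerivAt (fun t : ℝ => k * (t/2) ^ p) (k * (p * (1/2)) * (x/2) ^ (p-1)) x := by
  have h : HasDerivAt (fun t : ℝ => t/2) (1/2) x := (hasDerivAt_id x).div_const 2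
  have h2 := (h.rpow_const (p := p) (Or.inl (by positivity))).const_mul k
  have e : k * (p * (1/2)) * (x/2) ^ (p-1) = k * (1/2 * p * (x/2) ^ (p-1)) := by ring
  rw [e]
  exact h2

lemma besselRpowBound {a b x : ℝ} (e : ℝ) (ha : 0 < a) (hx : x ∈ Set.Ioo a b) (n : ℕ) :
    (x/2) ^ (2*(n:ℝ) + e) ≤ (b/2)^(2*n) * max ((a/2)^e) ((b/2)^e) := by
  obtain ⟨hax, hxb⟩ := hx
  have hx0 : 0 < x := lt_trans ha hax
  have hx2 : 0 < x/2 := by linarith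
  have ha2 : 0 < a/2 := by linarith
  have hb2 : 0 < b/2 := by linarith
  rw [Real.rpow_add hx2, show (2*(n:ℝ)) = ((2*n : ℕ) : ℝ) by push_cast; ring,
    Real.rpow_natCast]
  apply mul_le_mul
  · exact pow_le_pow_left₀ (le_of_lt hx2) (by linarith) _
  · rcases le_or_gt 0 e with he | he
    · exact le_max_of_le_right (Real.rpow_le_rpow (le_of_lt hx2) (by linarith) he)
    · exact le_max_of_le_left (Real.rpow_le_rpow_of_nonpos ha2 (by linarith) (le_of_lt he))
  · positivity
  · exact le_of_lt (pow_pos hb2 _)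

lemma besselTermBound {ν a b x k : ℝ} (e : ℝ) (n : ℕ) (ha : 0 < a) (hx : x ∈ Set.Ioo a b)
    (hk : |k| ≤ (2*(n:ℝ)+|ν|+2)^2) :
    ‖besselCoef ν n * k * (x/2) ^ (2*(n:ℝ) + e)‖ ≤
      max ((a/2)^e) ((b/2)^e) *
        ((2*(n:ℝ)+|ν|+2)^2 * (b/2)^(2*n) / ((n.factorial:ℝ) * |Real.Gamma (ν+(n:ℝ)+1)|)) := by
  have hx0 : 0 < x := lt_trans ha hx.1
  have hx2 : 0 < x/2 := by linarith
  have hb2 : (0:ℝ) < b/2 := by have := hx.2; linarith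
  have hrp : (0:ℝ) ≤ (x/2)^(2*(n:ℝ)+e) := Real.rpow_nonneg (le_of_lt hx2) _
  have hcoef : |besselCoef ν n| = 1 / ((n.factorial:ℝ) * |Real.Gamma (ν+(n:ℝ)+1)|) := by
    unfold besselCoef
    rw [abs_div, abs_pow, abs_neg, abs_one, one_pow, abs_mul, Nat.abs_cast]
  have hM0 : (0:ℝ) ≤ max ((a/2)^e) ((b/2)^e) :=
    le_max_of_le_right (Real.rpow_nonneg (le_of_lt hb2) e)
  rw [Real.norm_eq_abs, abs_mul, abs_mul, abs_of_nonneg hrp, hcoef]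
  calc 1 / ((n.factorial:ℝ) * |Real.Gamma (ν+(n:ℝ)+1)|) * |k| * (x/2)^(2*(n:ℝ)+e)
      ≤ 1 / ((n.factorial:ℝ) * |Real.Gamma (ν+(n:ℝ)+1)|) * (2*(n:ℝ)+|ν|+2)^2 *
          ((b/2)^(2*n) * max ((a/2)^e) ((b/2)^e)) := by
        apply mul_le_mul (mul_le_mul_of_nonneg_left hk (by positivity))
          (besselRpowBound e ha hx n) hrp (by positivity)
    _ = max ((a/2)^e) ((b/2)^e) *
        ((2*(n:ℝ)+|ν|+2)^2 * (b/2)^(2*n) / ((n.factorial:ℝ) * |Real.Gamma (ν+(n:ℝ)+1)|)) := by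
        ring

/-! ### Coefficient size bounds -/

lemma besselK0 (ν : ℝ) (n : ℕ) : |(1:ℝ)| ≤ (2*(n:ℝ)+|ν|+2)^2 := by
  have h0 : (0:ℝ) ≤ (n:ℝ) := Nat.cast_nonneg n
  have habs := abs_nonneg ν
  rw [abs_one]
  nlinarith

lemma bessel_abs1 (ν : ℝ) (n : ℕ) : |2*(n:ℝ)+ν| ≤ 2*(n:ℝ)+|ν| := by
  have h0 : (0:ℝ) ≤ (n:ℝ) := Nat.cast_nonneg n
  calc |2*(n:ℝ)+ν| ≤ |2*(n:ℝ)| + |ν| := abs_add_le _ _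
    _ = 2*(n:ℝ)+|ν| := by rw [abs_of_nonneg (by positivity)]

lemma bessel_abs2 (ν : ℝ) (n : ℕ) : |2*(n:ℝ)+ν-1| ≤ 2*(n:ℝ)+|ν|+1 := by
  have h0 : (0:ℝ) ≤ (n:ℝ) := Nat.cast_nonneg n
  calc |2*(n:ℝ)+ν-1| = |2*(n:ℝ)+(ν-1)| := by ring_nf
    _ ≤ |2*(n:ℝ)| + |ν-1| := abs_add_le _ _
    _ ≤ 2*(n:ℝ) + (|ν| + 1) := by
        rw [abs_of_nonneg (by positivity : (0:ℝ) ≤ 2*(n:ℝ))]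
        have : |ν - 1| ≤ |ν| + |(1:ℝ)| := abs_sub _ _
        simp only [abs_one] at this
        linarith
    _ = 2*(n:ℝ)+|ν|+1 := by ring

lemma besselK1 (ν : ℝ) (n : ℕ) : |(2*(n:ℝ)+ν) * (1/2)| ≤ (2*(n:ℝ)+|ν|+2)^2 := by
  have h0 : (0:ℝ) ≤ (n:ℝ) := Nat.cast_nonneg n
  have habs := abs_nonneg ν
  have ha := bessel_abs1 ν n
  rw [abs_mul, show |(1:ℝ)/2| = 1/2 by norm_num]
  nlinarith

lemma besselK2 (ν : ℝ) (n : ℕ) :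
    |(2*(n:ℝ)+ν) * (1/2) * ((2*(n:ℝ)+ν-1) * (1/2))| ≤ (2*(n:ℝ)+|ν|+2)^2 := by
  have h0 : (0:ℝ) ≤ (n:ℝ) := Nat.cast_nonneg n
  have habs := abs_nonneg ν
  have ha := bessel_abs1 ν n
  have hb := bessel_abs2 ν n
  have ha0 := abs_nonneg (2*(n:ℝ)+ν)
  have hb0 := abs_nonneg (2*(n:ℝ)+ν-1)
  have hprod : |2*(n:ℝ)+ν| * |2*(n:ℝ)+ν-1| ≤ (2*(n:ℝ)+|ν|) * (2*(n:ℝ)+|ν|+1) :=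
    mul_le_mul ha hb hb0 (by positivity)
  rw [abs_mul, abs_mul, abs_mul, show |(1:ℝ)/2| = 1/2 by norm_num]
  nlinarith

/-! ### The Bessel ODE, termwise -/

lemma besselODE (ν : ℝ) {z : ℝ} (hz : 0 < z)
    (h0 : Summable (fun n => bt0 ν n z)) (h1 : Summable (fun n => bt1 ν n z))
    (h2 : Summable (fun n => bt2 ν n z)) (hw : Summable (fun n : ℕ =>
      besselCoef ν n * (4*(n:ℝ)*((n:ℝ)+ν)) * (z/2) ^ (2*(n:ℝ)+ν))) :
    z^2 * (∑' n, bt2 ν n z) + z * (∑' n, bt1 ν n z) + (z^2-ν^2) * (∑' n, bt0 ν n z) = 0 := by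
  set w : ℕ → ℝ := fun n => besselCoef ν n * (4*(n:ℝ)*((n:ℝ)+ν)) * (z/2) ^ (2*(n:ℝ)+ν) with hwdef
  have hu : (0:ℝ) < z/2 := by linarith
  have hterm : ∀ n : ℕ, z^2 * bt2 ν n z + z * bt1 ν n z + (z^2-ν^2) * bt0 ν n z
      = w n - w (n+1) := by
    intro n
    have e1 : (z/2) ^ (2*(n:ℝ)+ν-1) = (z/2) ^ (2*(n:ℝ)+ν-2) * (z/2) := by
      rw [show 2*(n:ℝ)+ν-1 = (2*(n:ℝ)+ν-2)+1 by ring, Real.rpow_add hu, Real.rpow_one]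
    have e2 : (z/2) ^ (2*(n:ℝ)+ν) = (z/2) ^ (2*(n:ℝ)+ν-2) * (z/2)^(2:ℕ) := by
      rw [← Real.rpow_natCast (z/2) 2, ← Real.rpow_add hu]
      congr 1
      push_cast; ring
    have e3 : (z/2) ^ (2*((n:ℝ)+1)+ν) = (z/2) ^ (2*(n:ℝ)+ν-2) * (z/2)^(4:ℕ) := by
      rw [← Real.rpow_natCast (z/2) 4, ← Real.rpow_add hu]
      congr 1
      push_cast; ring
    have hkey := besselCoef_key ν n
    unfold bt0 bt1 bt2
    simp only [hwdef]
    push_cast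
    rw [e1, e2, e3]
    push_cast at hkey
    linear_combination (4*((z/2)^(2*(n:ℝ)+ν-2))*(z/2)^(4:ℕ)) * hkey
  have hw1 : Summable (fun n => w (n+1)) := (summable_nat_add_iff 1).2 hw
  calc z^2 * (∑' n, bt2 ν n z) + z * (∑' n, bt1 ν n z) + (z^2-ν^2) * (∑' n, bt0 ν n z)
      = (∑' n, z^2 * bt2 ν n z) + (∑' n, z * bt1 ν n z) + (∑' n, (z^2-ν^2) * bt0 ν n z) := by
        rw [tsum_mul_left, tsum_mul_left, tsum_mul_left]
    _ = ∑' n, (z^2 * bt2 ν n z + z * bt1 ν n z + (z^2-ν^2) * bt0 ν n z) := by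
        rw [Summable.tsum_add (((h2.mul_left _).add (h1.mul_left _))) (h0.mul_left _),
          Summable.tsum_add (h2.mul_left _) (h1.mul_left _)]
    _ = ∑' n, (w n - w (n+1)) := tsum_congr hterm
    _ = (∑' n, w n) - (∑' n, w (n+1)) := Summable.tsum_sub hw hw1
    _ = 0 := by
        have hs := Summable.sum_add_tsum_nat_add (f := w) 1 hw
        simp only [Finset.range_one, Finset.sum_singleton] at hs
        have hw0 : w 0 = 0 := by simp [hwdef]
        linarith
lemma besselKw (ν : ℝ) (n : ℕ) : |4*(n:ℝ)*((n:ℝ)+ν)| ≤ (2*(n:ℝ)+|ν|+2)^2 := by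
  have h0 : (0:ℝ) ≤ (n:ℝ) := Nat.cast_nonneg n
  have habs := abs_nonneg ν
  have h1 : |(n:ℝ)+ν| ≤ (n:ℝ)+|ν| := by
    calc |(n:ℝ)+ν| ≤ |(n:ℝ)| + |ν| := abs_add_le _ _
      _ = (n:ℝ)+|ν| := by rw [abs_of_nonneg h0]
  rw [abs_mul, abs_of_nonneg (by positivity : (0:ℝ) ≤ 4*(n:ℝ))]
  nlinarith

/-- The function `y = z J_ν'(z) + c J_ν(z)` satisfies
`z²(z² − ν² + c²) y'' − z(z² + ν² − c²) y' + [(z² − ν²)² + 2cz² + c²(z² − ν²)] y = 0`. -/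
theorem derivative_combination_ode (ν c : ℝ) :
    ∀ z : ℝ, 0 < z →
      z ^ 2 * (z ^ 2 - ν ^ 2 + c ^ 2) *
          iteratedDeriv 2 (fun t => t * deriv (besselJ ν) t + c * besselJ ν t) z
        - z * (z ^ 2 + ν ^ 2 - c ^ 2) *
          deriv (fun t => t * deriv (besselJ ν) t + c * besselJ ν t) z
        + ((z ^ 2 - ν ^ 2) ^ 2 + 2 * c * z ^ 2 + c ^ 2 * (z ^ 2 - ν ^ 2)) *
          (z * deriv (besselJ ν) z + c * besselJ ν z) = 0 := by
  intro z hz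
  have ha : (0:ℝ) < z/2 := by linarith
  have hmem : z ∈ Set.Ioo (z/2) (2*z) := ⟨by linarith, by linarith⟩
  have hv : Summable (fun n : ℕ => (2*(n:ℝ)+|ν|+2)^2 * ((2*z)/2)^(2*n) /
      ((n.factorial : ℝ) * |Real.Gamma (ν+(n:ℝ)+1)|)) :=
    besselMajorant_summable ν ((2*z)/2) (by linarith)
  -- termwise bounds on Ioo (z/2) (2z)
  have hb0 : ∀ (n:ℕ) (x:ℝ), x ∈ Set.Ioo (z/2) (2*z) → ‖bt0 ν n x‖ ≤
      max ((z/2/2)^ν) ((2*z/2)^ν) * ((2*(n:ℝ)+|ν|+2)^2 * ((2*z)/2)^(2*n) /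
        ((n.factorial:ℝ) * |Real.Gamma (ν+(n:ℝ)+1)|)) := by
    intro n x hx
    have h := besselTermBound (ν := ν) (a := z/2) (b := 2*z) ν n ha hx (besselK0 ν n)
    simpa [bt0] using h
  have hb1 : ∀ (n:ℕ) (x:ℝ), x ∈ Set.Ioo (z/2) (2*z) → ‖bt1 ν n x‖ ≤
      max ((z/2/2)^(ν-1)) ((2*z/2)^(ν-1)) * ((2*(n:ℝ)+|ν|+2)^2 * ((2*z)/2)^(2*n) /
        ((n.factorial:ℝ) * |Real.Gamma (ν+(n:ℝ)+1)|)) := by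
    intro n x hx
    have h := besselTermBound (ν := ν) (a := z/2) (b := 2*z) (ν-1) n ha hx (besselK1 ν n)
    rw [show 2*(n:ℝ) + (ν-1) = 2*(n:ℝ)+ν-1 by ring] at h
    simpa [bt1] using h
  have hb2 : ∀ (n:ℕ) (x:ℝ), x ∈ Set.Ioo (z/2) (2*z) → ‖bt2 ν n x‖ ≤
      max ((z/2/2)^(ν-2)) ((2*z/2)^(ν-2)) * ((2*(n:ℝ)+|ν|+2)^2 * ((2*z)/2)^(2*n) /
        ((n.factorial:ℝ) * |Real.Gamma (ν+(n:ℝ)+1)|)) := by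
    intro n x hx
    have h := besselTermBound (ν := ν) (a := z/2) (b := 2*z) (ν-2) n ha hx (besselK2 ν n)
    rw [show 2*(n:ℝ) + (ν-2) = 2*(n:ℝ)+ν-2 by ring] at h
    simpa [bt2, mul_assoc] using h
  -- summability
  have hS0 : ∀ x ∈ Set.Ioo (z/2) (2*z), Summable (fun n => bt0 ν n x) := fun x hx =>
    Summable.of_norm_bounded (hv.mul_left _) (fun n => hb0 n x hx)
  have hS1 : ∀ x ∈ Set.Ioo (z/2) (2*z), Summable (fun n => bt1 ν n x) := fun x hx =>
    Summable.of_norm_bounded (hv.mul_left _) (fun n => hb1 n x hx)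
  have hS2 : ∀ x ∈ Set.Ioo (z/2) (2*z), Summable (fun n => bt2 ν n x) := fun x hx =>
    Summable.of_norm_bounded (hv.mul_left _) (fun n => hb2 n x hx)
  have hSw : ∀ x ∈ Set.Ioo (z/2) (2*z), Summable (fun n : ℕ =>
      besselCoef ν n * (4*(n:ℝ)*((n:ℝ)+ν)) * (x/2) ^ (2*(n:ℝ)+ν)) := fun x hx =>
    Summable.of_norm_bounded (hv.mul_left (max ((z/2/2)^ν) ((2*z/2)^ν)))
      (fun n => besselTermBound (ν := ν) (a := z/2) (b := 2*z) ν n ha hx (besselKw ν n))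
  -- termwise derivatives
  have hd0 : ∀ (n:ℕ) (x:ℝ), x ∈ Set.Ioo (z/2) (2*z) → HasDerivAt (bt0 ν n) (bt1 ν n x) x := by
    intro n x hx
    have hx0 : 0 < x := lt_trans ha hx.1
    have h := besselHD (besselCoef ν n) (2*(n:ℝ)+ν) hx0
    unfold bt0 bt1
    exact h
  have hd1 : ∀ (n:ℕ) (x:ℝ), x ∈ Set.Ioo (z/2) (2*z) → HasDerivAt (bt1 ν n) (bt2 ν n x) x := by
    intro n x hx
    have hx0 : 0 < x := lt_trans ha hx.1
    have h := besselHD (besselCoef ν n * ((2*(n:ℝ)+ν) * (1/2))) (2*(n:ℝ)+ν-1) hx0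
    rw [show 2*(n:ℝ)+ν-1-1 = 2*(n:ℝ)+ν-2 by ring] at h
    unfold bt1 bt2
    exact h
  -- sums of derivatives
  have key1 : ∀ x ∈ Set.Ioo (z/2) (2*z),
      HasDerivAt (fun t => ∑' n, bt0 ν n t) (∑' n, bt1 ν n x) x := fun x hx =>
    hasDerivAt_tsum_of_isPreconnected (hv.mul_left _) isOpen_Ioo isPreconnected_Ioo
      hd0 hb1 hmem (hS0 z hmem) hx
  have key2 : ∀ x ∈ Set.Ioo (z/2) (2*z),
      HasDerivAt (fun t => ∑' n, bt1 ν n t) (∑' n, bt2 ν n x) x := fun x hx =>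
    hasDerivAt_tsum_of_isPreconnected (hv.mul_left _) isOpen_Ioo isPreconnected_Ioo
      hd1 hb2 hmem (hS1 z hmem) hx
  have hbJ : besselJ ν = fun t => ∑' n, bt0 ν n t := by
    funext x
    exact tsum_congr fun n => mul_div_right_comm _ _ _
  rw [hbJ]
  have hderivF : ∀ x ∈ Set.Ioo (z/2) (2*z),
      deriv (fun t => ∑' n, bt0 ν n t) x = ∑' n, bt1 ν n x := fun x hx => (key1 x hx).deriv
  have hode : ∀ x ∈ Set.Ioo (z/2) (2*z),
      x^2 * (∑' n, bt2 ν n x) + x * (∑' n, bt1 ν n x) + (x^2-ν^2) * (∑' n, bt0 ν n x) = 0 := by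
    intro x hx
    exact besselODE ν (lt_trans ha hx.1) (hS0 x hx) (hS1 x hx) (hS2 x hx) (hSw x hx)
  have hy' : ∀ x ∈ Set.Ioo (z/2) (2*z),
      deriv (fun t => t * deriv (fun s => ∑' n, bt0 ν n s) t + c * ∑' n, bt0 ν n t) x
      = c * (∑' n, bt1 ν n x) - (x^2-ν^2)/x * (∑' n, bt0 ν n x) := by
    intro x hx
    have hx0 : 0 < x := lt_trans ha hx.1
    have heq : (fun t => t * deriv (fun s => ∑' n, bt0 ν n s) t + c * ∑' n, bt0 ν n t)
        =ᶠ[nhds x] (fun t => t * (∑' n, bt1 ν n t) + c * ∑' n, bt0 ν n t) := by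
      filter_upwards [isOpen_Ioo.mem_nhds hx] with t ht
      rw [hderivF t ht]
    rw [heq.deriv_eq]
    have hder : HasDerivAt (fun t => t * (∑' n, bt1 ν n t) + c * ∑' n, bt0 ν n t)
        (1 * (∑' n, bt1 ν n x) + x * (∑' n, bt2 ν n x) + c * (∑' n, bt1 ν n x)) x :=
      ((hasDerivAt_id x).mul (key2 x hx)).add ((key1 x hx).const_mul c)
    rw [hder.deriv]
    have hodex := hode x hx
    field_simp
    linear_combination hodex
  have hiter : iteratedDeriv 2
        (fun t => t * deriv (fun s => ∑' n, bt0 ν n s) t + c * ∑' n, bt0 ν n t) z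
      = c * (∑' n, bt2 ν n z) - ((z^2+ν^2)/z^2 * (∑' n, bt0 ν n z)
          + (z^2-ν^2)/z * (∑' n, bt1 ν n z)) := by
    rw [iteratedDeriv_succ, iteratedDeriv_one]
    have heq2 : deriv (fun t => t * deriv (fun s => ∑' n, bt0 ν n s) t + c * ∑' n, bt0 ν n t)
        =ᶠ[nhds z] (fun x => c * (∑' n, bt1 ν n x) - (x^2-ν^2)/x * (∑' n, bt0 ν n x)) := by
      filter_upwards [isOpen_Ioo.mem_nhds hmem] with x hx
      exact hy' x hx
    rw [heq2.deriv_eq]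
    have hq : HasDerivAt (fun x : ℝ => (x^2-ν^2)/x) ((z^2+ν^2)/z^2) z := by
      have h1 : HasDerivAt (fun x : ℝ => x^2-ν^2) (2*z) z := by
        simpa using (hasDerivAt_pow 2 z).sub_const (ν^2)
      have h2 := h1.div (hasDerivAt_id z) (ne_of_gt hz)
      have e : (z^2+ν^2)/z^2 = (2 * z * id z - (z ^ 2 - ν ^ 2) * 1) / id z ^ 2 := by
        simp only [id_eq]
        ring
      rw [e]
      exact h2
    have hder2 : HasDerivAt
        (fun x => c * (∑' n, bt1 ν n x) - (x^2-ν^2)/x * (∑' n, bt0 ν n x))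
        (c * (∑' n, bt2 ν n z) - ((z^2+ν^2)/z^2 * (∑' n, bt0 ν n z)
          + (z^2-ν^2)/z * (∑' n, bt1 ν n z))) z := by
      have h3 := ((key2 z hmem).const_mul c).sub (hq.mul (key1 z hmem))
      exact h3
    rw [hder2.deriv]
  rw [hiter, hy' z hmem, hderivF z hmem]
  have hodez := hode z hmem
  have hz0 : z ≠ 0 := ne_of_gt hz
  field_simp
  linear_combination (c*(z^2-ν^2+c^2)) * hodez
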